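/- Let (Γ, c₀, c₁, …, c_r, t) be a decorated cactus. For any i with 1 ≤ i ≤ r and any flags f, f' ∈ c_i, if λ(f) = λ(f') then f = f'. -/

import Mathlib

open scoped Classical

/-- A *decorated cactus* (Definition 8.1 of the paper): a connected ribbon graph `Γ`
of genus `0`, together with cycles `c 0, c 1, …, c r` (orbits of `rot ∘ inv` on the
set of flags) whose disjoint union is the set of flags, such that every pair
`{f, inv f}` meets `c 0` in exactly one flag, and a distinguished tail `tail`.

* `V` is the (finite) set of vertices, `F` the (finite) set of flags;
* `lam : F → V` assigns to a flag its vertex, `inv` is the involution `ι`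
  (whose non-fixed orbits are the edges, and whose fixed points are the tails);
* `rot : F ≃ F` is the ribbon structure `N`, preserving `lam` and acting
  transitively on every fiber of `lam`;
* connectivity is phrased via walks of edges, and genus `0` via
  `#V + #cycles = #edges + 2` (i.e. `2 - 2g = #V - #E + #cycles` with `g = 0`). -/
structure DecoratedCactus (r : ℕ) : Type 1 where
  V : Type
  F : Type
  [finV : Fintype V]
  [finF : Fintype F]
  [decV : DecidableEq V]
  [decF : DecidableEq F]
  lam : F → V
  inv : F → F
  inv_invol : ∀ f, inv (inv f) = f
  rot : F ≃ F
  lam_rot : ∀ f, lam (rot f) = lam f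
  rot_trans : ∀ f g : F, lam f = lam g → ∃ n : ℕ, (fun x => rot x)^[n] f = g
  conn : Nonempty V ∧ ∀ v w : V,
    Relation.ReflTransGen (fun a b => ∃ f, inv f ≠ f ∧ lam f = a ∧ lam (inv f) = b) v w
  genus_zero :
    Fintype.card V +
      (Finset.univ.image (fun f : F =>
        Finset.univ.filter (fun g : F => ∃ n : ℕ, (fun x => rot (inv x))^[n] f = g))).card =
    ((Finset.univ.filter (fun f : F => inv f ≠ f)).image (fun f => s(f, inv f))).card + 2
  c : Fin (r + 1) → Set F
  c_cycle : ∀ i, ∃ f : F, c i = {g | ∃ n : ℕ, (fun x => rot (inv x))^[n] f = g}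
  c_disj : ∀ i j, i ≠ j → c i ∩ c j = ∅
  c_cover : (⋃ i, c i) = (Set.univ : Set F)
  flag_c0 : ∀ f : F, ({f, inv f} ∩ c 0 : Set F).encard = 1
  tail : F
  tail_tail : inv tail = tail

attribute [instance] DecoratedCactus.finV DecoratedCactus.finF
  DecoratedCactus.decV DecoratedCactus.decF

/-- Reachability from `v₀` in at most `n` steps. -/
inductive ReachN {V : Type*} (step : V → V → Prop) (v₀ : V) : ℕ → V → Prop
  | zero : ReachN step v₀ 0 v₀
  | succ {n u v} : ReachN step v₀ n u → step u v → ReachN step v₀ (n + 1) v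
  | stay {n v} : ReachN step v₀ n v → ReachN step v₀ (n + 1) v

/-- If a finite vertex set is connected by steps, each of which lies inside one of the
blocks `A i` (`i ∈ S`), then `#V + #S ≤ ∑ #(A i) + 1`. -/
theorem block_bound {V ι : Type*} [Fintype V] [DecidableEq V] [DecidableEq ι]
    [Nonempty V] (S : Finset ι) (A : ι → Finset V)
    (hA : ∀ i ∈ S, (A i).Nonempty)
    (step : V → V → Prop)
    (hstep : ∀ a b, step a b → ∃ i ∈ S, a ∈ A i ∧ b ∈ A i)
    (hconn : ∀ v w, Relation.ReflTransGen step v w) :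
    Fintype.card V + S.card ≤ (∑ i ∈ S, (A i).card) + 1 := by
  obtain ⟨v₀⟩ := ‹Nonempty V›
  rcases S.eq_empty_or_nonempty with hS | ⟨i₀, hi₀⟩
  · -- no blocks: the graph has a single vertex
    subst hS
    have : ∀ v : V, v = v₀ := by
      intro v
      induction hconn v₀ v with
      | refl => rfl
      | tail _ hst _ => obtain ⟨i, hi, -⟩ := hstep _ _ hst; exact absurd hi (by simp)
    have h1 : Fintype.card V = 1 := by
      have : (Finset.univ : Finset V) = {v₀} := by
        ext v; simp [this v]
      simp [← Finset.card_univ, this]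
    simp [h1]
  have hreach : ∀ v, ∃ n, ReachN step v₀ n v := by
    intro v
    induction hconn v₀ v with
    | refl => exact ⟨0, ReachN.zero⟩
    | tail _ hst ih => obtain ⟨n, hn⟩ := ih; exact ⟨n + 1, hn.succ hst⟩
  let dist : V → ℕ := fun v => Nat.find (hreach v)
  have hdist_spec : ∀ v, ReachN step v₀ (dist v) v := fun v => Nat.find_spec (hreach v)
  have hdist_min : ∀ v m, ReachN step v₀ m v → dist v ≤ m := fun v m h =>
    Nat.find_min' (hreach v) h
  -- every `v ≠ v₀` has a predecessor `u` with `step u v` and `dist u < dist v`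
  have hpred : ∀ v : V, v ≠ v₀ → ∃ u, step u v ∧ dist u < dist v := by
    intro v hv
    have h0 : dist v ≠ 0 := by
      intro h0
      have := hdist_spec v
      rw [h0] at this
      cases this
      exact hv rfl
    obtain ⟨k, hk⟩ : ∃ k, dist v = k + 1 := ⟨dist v - 1, (Nat.succ_pred_eq_of_pos (Nat.pos_of_ne_zero h0)).symm⟩
    have := hdist_spec v
    rw [hk] at this
    cases this with
    | succ hu hst =>
      rename_i u'
      refine ⟨u', hst, ?_⟩
      calc dist u' ≤ k := hdist_min _ _ hu
        _ < k + 1 := Nat.lt_succ_self k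
        _ = dist v := hk.symm
    | stay h =>
      exact absurd (hdist_min v k h) (by omega)
  -- choose for each `v ≠ v₀` a block containing `v` and its predecessor
  have hchoice : ∀ v : V, v ≠ v₀ → ∃ i ∈ S, v ∈ A i ∧ ∃ u ∈ A i, dist u < dist v := by
    intro v hv
    obtain ⟨u, hst, hlt⟩ := hpred v hv
    obtain ⟨i, hiS, hui, hvi⟩ := hstep u v hst
    exact ⟨i, hiS, hvi, u, hui, hlt⟩
  -- choose for each block a vertex of minimal distance
  have hmin : ∀ i ∈ S, ∃ w ∈ A i, ∀ x ∈ A i, dist w ≤ dist x := by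
    intro i hi
    obtain ⟨w, hw, hwmin⟩ := Finset.exists_min_image (A i) dist (hA i hi)
    exact ⟨w, hw, hwmin⟩
  classical
  let w : ι → V := fun i => if h : i ∈ S then (hmin i h).choose else Classical.arbitrary V
  have hwA : ∀ i ∈ S, w i ∈ A i := by
    intro i hi; simp only [w, dif_pos hi]; exact (hmin i hi).choose_spec.1
  have hwmin : ∀ i ∈ S, ∀ x ∈ A i, dist (w i) ≤ dist x := by
    intro i hi; simp only [w, dif_pos hi]; exact (hmin i hi).choose_spec.2
  let idx : V → ι := fun v =>
    if h : v ≠ v₀ then (hchoice v h).choose else i₀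
  have hidx : ∀ v, v ≠ v₀ → idx v ∈ S ∧ v ∈ A (idx v) ∧ ∃ u ∈ A (idx v), dist u < dist v := by
    intro v hv
    simp only [idx, dif_pos hv]
    obtain ⟨h1, h2, h3⟩ := (hchoice v hv).choose_spec
    exact ⟨h1, h2, h3⟩
  have hne : ∀ v, v ≠ v₀ → v ≠ w (idx v) := by
    intro v hv hvw
    obtain ⟨hiS, hvA, u, huA, hult⟩ := hidx v hv
    have := hwmin (idx v) hiS u huA
    rw [← hvw] at this
    omega
  -- the injection `v ↦ (idx v, v)` from `V \ {v₀}` into `Σ_{i ∈ S} (A i \ {w i})`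
  set T : Finset (ι × V) :=
    S.biUnion (fun i => ((A i).erase (w i)).image (fun v => (i, v))) with hT
  have hmaps : ∀ v ∈ Finset.univ.erase v₀, (idx v, v) ∈ T := by
    intro v hv
    have hv' : v ≠ v₀ := (Finset.mem_erase.1 hv).1
    obtain ⟨hiS, hvA, -⟩ := hidx v hv'
    exact Finset.mem_biUnion.2 ⟨idx v, hiS,
      Finset.mem_image.2 ⟨v, Finset.mem_erase.2 ⟨hne v hv', hvA⟩, rfl⟩⟩
  have hcard1 : (Finset.univ.erase v₀).card ≤ T.card :=
    Finset.card_le_card_of_injOn (fun v => (idx v, v)) hmaps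
      (fun v1 _ v2 _ e => congrArg Prod.snd e)
  have hcard2 : T.card ≤ ∑ i ∈ S, ((A i).card - 1) := by
    refine (Finset.card_biUnion_le).trans (Finset.sum_le_sum fun i hi => ?_)
    calc (((A i).erase (w i)).image (fun v => (i, v))).card
        ≤ ((A i).erase (w i)).card := Finset.card_image_le
      _ = (A i).card - 1 := Finset.card_erase_of_mem (hwA i hi)
  have hcard3 : ∑ i ∈ S, (A i).card = (∑ i ∈ S, ((A i).card - 1)) + S.card := by
    rw [Finset.sum_congr rfl
      (fun i hi => ((Nat.sub_add_cancel (Finset.card_pos.2 (hA i hi))).symm :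
        (A i).card = ((A i).card - 1) + 1)), Finset.sum_add_distrib]
    simp
  have hcard4 : (Finset.univ.erase v₀).card = Fintype.card V - 1 := by
    rw [Finset.card_erase_of_mem (Finset.mem_univ v₀), Finset.card_univ]
  have hpos : 1 ≤ Fintype.card V := Fintype.card_pos
  omega

namespace DecoratedCactus

variable {r : ℕ} (d : DecoratedCactus r)

/-- The face permutation `N ∘ ι` as a permutation. -/
noncomputable def p : Equiv.Perm d.F :=
  (Function.Involutive.toPerm d.inv d.inv_invol).trans d.rot

@[simp] lemma p_apply (f : d.F) : d.p f = d.rot (d.inv f) := rfl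

lemma iterate_eq (n : ℕ) (f : d.F) :
    (fun x => d.rot (d.inv x))^[n] f = (d.p ^ n) f := by
  have : (fun x => d.rot (d.inv x)) = ⇑d.p := rfl
  rw [this, Equiv.Perm.iterate_eq_pow]

lemma exists_iterate_iff_sameCycle (f g : d.F) :
    (∃ n : ℕ, (fun x => d.rot (d.inv x))^[n] f = g) ↔ d.p.SameCycle f g := by
  constructor
  · rintro ⟨n, rfl⟩
    rw [iterate_eq]
    exact ⟨n, by rw [zpow_natCast]⟩
  · intro h
    haveI : Finite d.F := Finite.of_fintype d.F
    obtain ⟨n, -, hn⟩ := h.exists_pow_eq'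
    exact ⟨n, by rw [iterate_eq]; exact hn⟩

lemma mem_c_self (i : Fin (r + 1)) : ∃ f, f ∈ d.c i := by
  obtain ⟨f, hf⟩ := d.c_cycle i
  exact ⟨f, by rw [hf]; exact ⟨0, rfl⟩⟩

lemma c_eq_class {i : Fin (r + 1)} {f : d.F} (hf : f ∈ d.c i) :
    d.c i = {g | d.p.SameCycle f g} := by
  obtain ⟨f₀, h₀⟩ := d.c_cycle i
  have h₀' : d.c i = {g | d.p.SameCycle f₀ g} := by
    rw [h₀]; ext g; exact d.exists_iterate_iff_sameCycle f₀ g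
  rw [h₀'] at hf ⊢
  ext g
  exact ⟨fun hg => hf.symm.trans hg, fun hg => (hf : d.p.SameCycle f₀ f).trans hg⟩

lemma mem_c_of_sameCycle {i : Fin (r + 1)} {f g : d.F} (hf : f ∈ d.c i)
    (h : d.p.SameCycle f g) : g ∈ d.c i := by
  rw [d.c_eq_class hf]; exact h

lemma p_mem_c {i : Fin (r + 1)} {f : d.F} (hf : f ∈ d.c i) : d.p f ∈ d.c i :=
  d.mem_c_of_sameCycle hf ⟨1, by simp⟩

lemma exists_mem_c (f : d.F) : ∃ i, f ∈ d.c i := by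
  have := d.c_cover
  have hf : f ∈ (⋃ i, d.c i) := this ▸ Set.mem_univ f
  simpa using hf

lemma c_index_unique {i j : Fin (r + 1)} {f : d.F} (hf : f ∈ d.c i) (hg : f ∈ d.c j) :
    i = j := by
  by_contra hij
  have := d.c_disj i j hij
  exact absurd (Set.mem_inter hf hg) (by rw [this]; exact id)

/-- Exactly one element of `{f, inv f}` is in `c 0`. -/
lemma exactly_one (f : d.F) : ∃ a, ({f, d.inv f} ∩ d.c 0 : Set d.F) = {a} :=
  Set.encard_eq_one.1 (d.flag_c0 f)

lemma mem_c0_of_tail {f : d.F} (hf : d.inv f = f) : f ∈ d.c 0 := by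
  obtain ⟨a, ha⟩ := d.exactly_one f
  rw [hf] at ha
  have haf : a ∈ ({f, f} ∩ d.c 0 : Set d.F) := ha ▸ rfl
  obtain ⟨hm, hc⟩ := haf
  rcases hm with h | h <;> exact h ▸ hc

lemma inv_ne_of_not_mem_c0 {f : d.F} (hf : f ∉ d.c 0) : d.inv f ≠ f :=
  fun h => hf (d.mem_c0_of_tail h)

lemma inv_mem_c0_of_not_mem_c0 {f : d.F} (hf : f ∉ d.c 0) : d.inv f ∈ d.c 0 := by
  obtain ⟨a, ha⟩ := d.exactly_one f
  have haf : a ∈ ({f, d.inv f} ∩ d.c 0 : Set d.F) := ha ▸ rfl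
  obtain ⟨hm, hc⟩ := haf
  rcases hm with h | h
  · exact absurd (h ▸ hc) hf
  · exact h ▸ hc

lemma not_both_c0 {f : d.F} (hef : d.inv f ≠ f) (hf : f ∈ d.c 0) : d.inv f ∉ d.c 0 := by
  intro hif
  obtain ⟨a, ha⟩ := d.exactly_one f
  have h1 : f ∈ ({f, d.inv f} ∩ d.c 0 : Set d.F) := ⟨Or.inl rfl, hf⟩
  have h2 : d.inv f ∈ ({f, d.inv f} ∩ d.c 0 : Set d.F) := ⟨Or.inr rfl, hif⟩
  rw [ha] at h1 h2
  exact hef (h2.trans h1.symm)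

lemma lam_p (f : d.F) : d.lam (d.p f) = d.lam (d.inv f) := by
  simp [d.lam_rot]

/-- The cycle `c i` as a finset. -/
noncomputable def Cf (i : Fin (r + 1)) : Finset d.F := Finset.univ.filter (· ∈ d.c i)

lemma mem_Cf {i : Fin (r + 1)} {f : d.F} : f ∈ d.Cf i ↔ f ∈ d.c i := by simp [Cf]

lemma card_cycles :
    (Finset.univ.image (fun f : d.F =>
      Finset.univ.filter (fun g : d.F => ∃ n : ℕ, (fun x => d.rot (d.inv x))^[n] f = g))).card
      = r + 1 := by
  have himg : (Finset.univ.image (fun f : d.F =>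
      Finset.univ.filter (fun g : d.F => ∃ n : ℕ, (fun x => d.rot (d.inv x))^[n] f = g)))
      = Finset.univ.image (fun i : Fin (r + 1) => d.Cf i) := by
    ext s
    simp only [Finset.mem_image, Finset.mem_univ, true_and]
    constructor
    · rintro ⟨f, rfl⟩
      obtain ⟨i, hfi⟩ := d.exists_mem_c f
      refine ⟨i, ?_⟩
      ext g
      simp only [Cf, Finset.mem_filter, Finset.mem_univ, true_and]
      rw [d.exists_iterate_iff_sameCycle f g, d.c_eq_class hfi]
      exact Iff.rfl
    · rintro ⟨i, rfl⟩
      obtain ⟨f, hfi⟩ := d.mem_c_self i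
      refine ⟨f, ?_⟩
      ext g
      simp only [Cf, Finset.mem_filter, Finset.mem_univ, true_and]
      rw [d.exists_iterate_iff_sameCycle f g, d.c_eq_class hfi]
      exact Iff.rfl
  rw [himg, Finset.card_image_of_injOn, Finset.card_univ, Fintype.card_fin]
  intro i _ j _ hij
  obtain ⟨f, hfi⟩ := d.mem_c_self i
  have hij' : d.Cf i = d.Cf j := hij
  have hfj : f ∈ d.Cf j := hij' ▸ (d.mem_Cf.2 hfi)
  exact d.c_index_unique hfi (d.mem_Cf.1 hfj)

lemma card_edges :
    ((Finset.univ.filter (fun f : d.F => d.inv f ≠ f)).image (fun f => s(f, d.inv f))).card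
      = (Finset.univ.filter (fun f : d.F => f ∉ d.c 0)).card := by
  have himg : (Finset.univ.filter (fun f : d.F => d.inv f ≠ f)).image (fun f => s(f, d.inv f))
      = (Finset.univ.filter (fun f : d.F => f ∉ d.c 0)).image (fun f => s(f, d.inv f)) := by
    ext e
    simp only [Finset.mem_image, Finset.mem_filter, Finset.mem_univ, true_and]
    constructor
    · rintro ⟨f, hef, rfl⟩
      by_cases hf0 : f ∈ d.c 0
      · exact ⟨d.inv f, d.not_both_c0 hef hf0, by rw [d.inv_invol]; exact Sym2.eq_swap⟩
      · exact ⟨f, hf0, rfl⟩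
    · rintro ⟨f, hf0, rfl⟩
      exact ⟨f, d.inv_ne_of_not_mem_c0 hf0, rfl⟩
  rw [himg]
  apply Finset.card_image_of_injOn
  intro f hf g hg he
  simp only [Finset.coe_filter, Set.mem_setOf_eq, Finset.mem_univ, true_and] at hf hg
  rcases Sym2.eq_iff.1 he with ⟨h1, -⟩ | ⟨h1, h2⟩
  · exact h1
  · exfalso
    have : d.inv g ∈ d.c 0 := d.inv_mem_c0_of_not_mem_c0 hg
    rw [← h1] at this
    exact hf this

lemma card_notc0 :
    (Finset.univ.filter (fun f : d.F => f ∉ d.c 0)).card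
      = ∑ i ∈ Finset.univ.erase (0 : Fin (r + 1)), (d.Cf i).card := by
  have hset : Finset.univ.filter (fun f : d.F => f ∉ d.c 0)
      = (Finset.univ.erase (0 : Fin (r + 1))).biUnion (fun i => d.Cf i) := by
    ext f
    simp only [Finset.mem_filter, Finset.mem_univ, true_and, Finset.mem_biUnion,
      Finset.mem_erase]
    constructor
    · intro hf
      obtain ⟨i, hfi⟩ := d.exists_mem_c f
      exact ⟨i, ⟨fun h => hf (h ▸ hfi), trivial⟩, d.mem_Cf.2 hfi⟩
    · rintro ⟨i, ⟨hi0, -⟩, hfi⟩ hf0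
      exact hi0 (d.c_index_unique (d.mem_Cf.1 hfi) hf0)
  rw [hset]
  apply Finset.card_biUnion
  intro i _ j _ hij
  rw [Function.onFun_apply, Finset.disjoint_left]
  intro f hfi hfj
  exact hij (d.c_index_unique (d.mem_Cf.1 hfi) (d.mem_Cf.1 hfj))

lemma card_V_eq :
    Fintype.card d.V + r
      = (∑ i ∈ Finset.univ.erase (0 : Fin (r + 1)), (d.Cf i).card) + 1 := by
  have hg := d.genus_zero
  rw [d.card_cycles, d.card_edges, d.card_notc0] at hg
  omega

end DecoratedCactus

/-- Corollary 8.3.  In a decorated cactus, two flags of the same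
non-zeroth cycle `c i` (`1 ≤ i ≤ r`) based at the same vertex are equal. -/
theorem DecoratedCactus.eq_of_mem_cycle_of_lam_eq {r : ℕ} (d : DecoratedCactus r)
    (i : Fin (r + 1)) (hi : i ≠ 0) (f f' : d.F)
    (hf : f ∈ d.c i) (hf' : f' ∈ d.c i) (h : d.lam f = d.lam f') : f = f' := by
  classical
  set S : Finset (Fin (r + 1)) := Finset.univ.erase 0 with hS
  set A : Fin (r + 1) → Finset d.V := fun j => (d.Cf j).image d.lam with hA
  haveI : Nonempty d.V := d.conn.1
  have hstep : ∀ a b : d.V, (∃ g, d.inv g ≠ g ∧ d.lam g = a ∧ d.lam (d.inv g) = b) →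
      ∃ j ∈ S, a ∈ A j ∧ b ∈ A j := by
    rintro a b ⟨g, heg, rfl, rfl⟩
    by_cases hg0 : g ∈ d.c 0
    · have hig0 : d.inv g ∉ d.c 0 := d.not_both_c0 heg hg0
      obtain ⟨j, hj⟩ := d.exists_mem_c (d.inv g)
      have hj0 : j ≠ 0 := fun hh => hig0 (hh ▸ hj)
      refine ⟨j, Finset.mem_erase.2 ⟨hj0, Finset.mem_univ _⟩, ?_, ?_⟩
      · have hp : d.p (d.inv g) ∈ d.c j := d.p_mem_c hj
        have hl : d.lam (d.p (d.inv g)) = d.lam g := by rw [d.lam_p, d.inv_invol]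
        exact Finset.mem_image.2 ⟨_, d.mem_Cf.2 hp, hl⟩
      · exact Finset.mem_image.2 ⟨_, d.mem_Cf.2 hj, rfl⟩
    · obtain ⟨j, hj⟩ := d.exists_mem_c g
      have hj0 : j ≠ 0 := fun hh => hg0 (hh ▸ hj)
      refine ⟨j, Finset.mem_erase.2 ⟨hj0, Finset.mem_univ _⟩,
        Finset.mem_image.2 ⟨g, d.mem_Cf.2 hj, rfl⟩, ?_⟩
      have hp : d.p g ∈ d.c j := d.p_mem_c hj
      exact Finset.mem_image.2 ⟨_, d.mem_Cf.2 hp, d.lam_p g⟩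
  have hA_ne : ∀ j ∈ S, (A j).Nonempty := by
    intro j _
    obtain ⟨g, hg⟩ := d.mem_c_self j
    exact ⟨d.lam g, Finset.mem_image.2 ⟨g, d.mem_Cf.2 hg, rfl⟩⟩
  have hbb := block_bound S A hA_ne
    (fun a b => ∃ g, d.inv g ≠ g ∧ d.lam g = a ∧ d.lam (d.inv g) = b) hstep d.conn.2
  have hScard : S.card = r := by
    rw [hS, Finset.card_erase_of_mem (Finset.mem_univ _), Finset.card_univ, Fintype.card_fin]
    simp
  have hle : ∀ j ∈ S, (A j).card ≤ (d.Cf j).card := fun j _ => Finset.card_image_le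
  have hsum_le : ∑ j ∈ S, (A j).card ≤ ∑ j ∈ S, (d.Cf j).card := Finset.sum_le_sum hle
  have hVeq := d.card_V_eq
  rw [← hS] at hVeq
  have hsum_eq : ∑ j ∈ S, (A j).card = ∑ j ∈ S, (d.Cf j).card := by omega
  have hiS : i ∈ S := Finset.mem_erase.2 ⟨hi, Finset.mem_univ _⟩
  have hcards : (A i).card = (d.Cf i).card :=
    (Finset.sum_eq_sum_iff_of_le hle).1 hsum_eq i hiS
  have hinj : Set.InjOn d.lam ↑(d.Cf i) := Finset.card_image_iff.1 hcards
  exact hinj (Finset.mem_coe.2 (d.mem_Cf.2 hf)) (Finset.mem_coe.2 (d.mem_Cf.2 hf')) h
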